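/- If G and H are finite connected simple graphs, each with at least 2 vertices, then vv(G □ H) ≥ max{Δ(G)·n(H), Δ(H)·n(G)}, where □ denotes the Cartesian product of graphs. -/

import Mathlib

open SimpleGraph

variable {V : Type*}

/-- A walk `p` is a shortest path between its endpoints. -/
def SimpleGraph.IsShortestPath (G : SimpleGraph V) {x y : V} (p : G.Walk x y) : Prop :=
  p.IsPath ∧ p.length = G.dist x y

/-- `S` is an `x`-visibility set: `x ∉ S` and for every `y ∈ S` there is a shortest
`x,y`-path meeting `S` only in `y`. -/
def SimpleGraph.IsXVisSet (G : SimpleGraph V) (x : V) (S : Finset V) : Prop :=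
  x ∉ S ∧ ∀ y ∈ S, ∃ p : G.Walk x y, G.IsShortestPath p ∧
    ∀ z ∈ p.support, z ∈ S → z = y

/-- The `x`-visibility number `v_x(G)`: the maximum cardinality of an `x`-visibility set. -/
noncomputable def SimpleGraph.vx (G : SimpleGraph V) (x : V) : ℕ :=
  sSup {n | ∃ S : Finset V, G.IsXVisSet x S ∧ S.card = n}

/-- The vertex visibility number `vv(G)`: the maximum of `v_x(G)` over all vertices. -/
noncomputable def SimpleGraph.vv (G : SimpleGraph V) [Fintype V] : ℕ :=
  Finset.univ.sup fun x => G.vx x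

section Aux

variable {W : Type*} {G : SimpleGraph V} {H : SimpleGraph W}

/-- Lower bound: any walk in the box product is at least as long as the sum of distances
of the projections. -/
lemma aux_dist_le_walk (hG : G.Connected) (hH : H.Connected) :
    ∀ {x y : V × W} (p : (G.boxProd H).Walk x y),
      G.dist x.1 y.1 + H.dist x.2 y.2 ≤ p.length := by
  intro x y p
  induction p with
  | nil => simp
  | @cons a b c hab q ih =>
    rcases (SimpleGraph.boxProd_adj.mp hab) with ⟨h1, h2⟩ | ⟨h1, h2⟩
    · have hd1 : G.dist a.1 c.1 ≤ 1 + G.dist b.1 c.1 := by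
        calc G.dist a.1 c.1 ≤ G.dist a.1 b.1 + G.dist b.1 c.1 := hG.dist_triangle
          _ ≤ 1 + G.dist b.1 c.1 := by
              have : G.dist a.1 b.1 = 1 := SimpleGraph.dist_eq_one_iff_adj.mpr h1
              omega
      have hd2 : H.dist a.2 c.2 = H.dist b.2 c.2 := by rw [h2]
      simp only [SimpleGraph.Walk.length_cons]
      omega
    · have hd1 : H.dist a.2 c.2 ≤ 1 + H.dist b.2 c.2 := by
        calc H.dist a.2 c.2 ≤ H.dist a.2 b.2 + H.dist b.2 c.2 := hH.dist_triangle
          _ ≤ 1 + H.dist b.2 c.2 := by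
              have : H.dist a.2 b.2 = 1 := SimpleGraph.dist_eq_one_iff_adj.mpr h1
              omega
      have hd2 : G.dist a.1 c.1 = G.dist b.1 c.1 := by rw [h2]
      simp only [SimpleGraph.Walk.length_cons]
      omega

lemma aux_visL [Fintype V] [Fintype W] [DecidableRel G.Adj]
    (hG : G.Connected) (hH : H.Connected) (g : V) (h : W) :
    (G.boxProd H).IsXVisSet (g, h) ((G.neighborFinset g) ×ˢ (Finset.univ : Finset W)) := by
  classical
  constructor
  · simp [Finset.mem_product]
  · rintro ⟨g', h'⟩ hy
    rw [Finset.mem_product, SimpleGraph.mem_neighborFinset] at hy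
    obtain ⟨hgg', -⟩ := hy
    obtain ⟨q, hq, hqlen⟩ := hH.exists_path_of_dist h h'
    have hadj : (G.boxProd H).Adj (g, h') (g', h') :=
      SimpleGraph.boxProd_adj_left.mpr hgg'
    refine ⟨(q.boxProdRight G g).concat hadj, ⟨?_, ?_⟩, ?_⟩
    · -- IsPath
      rw [SimpleGraph.Walk.isPath_def, SimpleGraph.Walk.support_concat,
        List.nodup_append']
      have hsupp : (q.boxProdRight G g).support = q.support.map (Prod.mk g) := by
        simp [SimpleGraph.Walk.boxProdRight, SimpleGraph.Walk.support_map]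
        exact SimpleGraph.Walk.support_map _ _
      refine ⟨?_, List.nodup_singleton _, ?_⟩
      · rw [hsupp]
        exact (hq.support_nodup).map (fun a b hab => by simpa using hab)
      · intro z hz hz'
        simp only [List.mem_singleton] at hz'
        subst hz'
        rw [hsupp, List.mem_map] at hz
        obtain ⟨b, -, hb⟩ := hz
        exact hgg'.ne' (congrArg Prod.fst hb).symm
    · -- length = dist
      rw [SimpleGraph.Walk.length_concat]
      have hlen : (q.boxProdRight G g).length = q.length := by
        simp [SimpleGraph.Walk.boxProdRight]
        exact SimpleGraph.Walk.length_map _ _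
      have hle : (G.boxProd H).dist (g, h) (g', h') ≤ q.length + 1 := by
        have := SimpleGraph.dist_le ((q.boxProdRight G g).concat hadj)
        rwa [SimpleGraph.Walk.length_concat, hlen] at this
      have hge : q.length + 1 ≤ (G.boxProd H).dist (g, h) (g', h') := by
        obtain ⟨p, hp⟩ := ((hG.boxProd hH).exists_walk_length_eq_dist (g, h) (g', h'))
        have := aux_dist_le_walk hG hH p
        have hdg : G.dist g g' = 1 := SimpleGraph.dist_eq_one_iff_adj.mpr hgg'
        simp only at this
        omega
      omega
    · -- support condition
      intro z hz hzS
      rw [SimpleGraph.Walk.support_concat, List.mem_append] at hz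
      rcases hz with hz | hz
      · exfalso
        have hsupp : (q.boxProdRight G g).support = q.support.map (Prod.mk g) := by
          simp [SimpleGraph.Walk.boxProdRight, SimpleGraph.Walk.support_map]
          exact SimpleGraph.Walk.support_map _ _
        rw [hsupp, List.mem_map] at hz
        obtain ⟨b, -, hb⟩ := hz
        rw [Finset.mem_product, SimpleGraph.mem_neighborFinset] at hzS
        have : z.1 = g := (congrArg Prod.fst hb).symm
        exact G.irrefl (this ▸ hzS.1)
      · simpa using hz

lemma aux_visR [Fintype V] [Fintype W] [DecidableRel H.Adj]
    (hG : G.Connected) (hH : H.Connected) (g : V) (h : W) :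
    (G.boxProd H).IsXVisSet (g, h) ((Finset.univ : Finset V) ×ˢ (H.neighborFinset h)) := by
  classical
  constructor
  · simp [Finset.mem_product]
  · rintro ⟨g', h'⟩ hy
    rw [Finset.mem_product, SimpleGraph.mem_neighborFinset] at hy
    obtain ⟨-, hhh'⟩ := hy
    obtain ⟨q, hq, hqlen⟩ := hG.exists_path_of_dist g g'
    have hadj : (G.boxProd H).Adj (g', h) (g', h') :=
      SimpleGraph.boxProd_adj_right.mpr hhh'
    refine ⟨(q.boxProdLeft H h).concat hadj, ⟨?_, ?_⟩, ?_⟩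
    · rw [SimpleGraph.Walk.isPath_def, SimpleGraph.Walk.support_concat,
        List.nodup_append']
      have hsupp : (q.boxProdLeft H h).support = q.support.map (fun a => (a, h)) := by
        simp [SimpleGraph.Walk.boxProdLeft, SimpleGraph.Walk.support_map]
        exact SimpleGraph.Walk.support_map _ _
      refine ⟨?_, List.nodup_singleton _, ?_⟩
      · rw [hsupp]
        exact (hq.support_nodup).map (fun a b hab => by simpa using hab)
      · intro z hz hz'
        simp only [List.mem_singleton] at hz'
        subst hz'
        rw [hsupp, List.mem_map] at hz
        obtain ⟨b, -, hb⟩ := hz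
        exact hhh'.ne' (congrArg Prod.snd hb).symm
    · rw [SimpleGraph.Walk.length_concat]
      have hlen : (q.boxProdLeft H h).length = q.length := by
        simp [SimpleGraph.Walk.boxProdLeft]
        exact SimpleGraph.Walk.length_map _ _
      have hle : (G.boxProd H).dist (g, h) (g', h') ≤ q.length + 1 := by
        have := SimpleGraph.dist_le ((q.boxProdLeft H h).concat hadj)
        rwa [SimpleGraph.Walk.length_concat, hlen] at this
      have hge : q.length + 1 ≤ (G.boxProd H).dist (g, h) (g', h') := by
        obtain ⟨p, hp⟩ := ((hG.boxProd hH).exists_walk_length_eq_dist (g, h) (g', h'))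
        have := aux_dist_le_walk hG hH p
        have hdh : H.dist h h' = 1 := SimpleGraph.dist_eq_one_iff_adj.mpr hhh'
        simp only at this
        omega
      omega
    · intro z hz hzS
      rw [SimpleGraph.Walk.support_concat, List.mem_append] at hz
      rcases hz with hz | hz
      · exfalso
        have hsupp : (q.boxProdLeft H h).support = q.support.map (fun a => (a, h)) := by
          simp [SimpleGraph.Walk.boxProdLeft, SimpleGraph.Walk.support_map]
          exact SimpleGraph.Walk.support_map _ _
        rw [hsupp, List.mem_map] at hz
        obtain ⟨b, -, hb⟩ := hz
        rw [Finset.mem_product, SimpleGraph.mem_neighborFinset] at hzS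
        have : z.2 = h := (congrArg Prod.snd hb).symm
        exact H.irrefl (this ▸ hzS.2)
      · simpa using hz

lemma aux_card_le_vv {U : Type*} [Fintype U] (K : SimpleGraph U) (x : U)
    (S : Finset U) (hS : K.IsXVisSet x S) : S.card ≤ K.vv := by
  have h1 : S.card ≤ K.vx x := by
    apply le_csSup
    · refine ⟨Fintype.card U, ?_⟩
      rintro n ⟨T, -, rfl⟩
      exact T.card_le_univ.trans (le_of_eq (Finset.card_univ))
    · exact ⟨S, hS, rfl⟩
  exact h1.trans (Finset.le_sup (Finset.mem_univ x))

end Aux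

/-- vv(G □ H) ≥ max{Δ(G)·n(H), Δ(H)·n(G)}. -/
theorem stmt_13 {W : Type*} [Fintype V] [Fintype W]
    (G : SimpleGraph V) (H : SimpleGraph W)
    [DecidableRel G.Adj] [DecidableRel H.Adj]
    (hG : G.Connected) (hH : H.Connected)
    (hV : 2 ≤ Fintype.card V) (hW : 2 ≤ Fintype.card W) :
    max (G.maxDegree * Fintype.card W) (H.maxDegree * Fintype.card V)
      ≤ (G.boxProd H).vv := by
  classical
  have hVne : Nonempty V := Fintype.card_pos_iff.mp (by omega)
  have hWne : Nonempty W := Fintype.card_pos_iff.mp (by omega)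
  obtain ⟨g₀, hg₀⟩ := G.exists_maximal_degree_vertex
  obtain ⟨h₀, hh₀⟩ := H.exists_maximal_degree_vertex
  apply max_le
  · have := aux_card_le_vv (G.boxProd H) (g₀, Classical.arbitrary W)
      ((G.neighborFinset g₀) ×ˢ (Finset.univ : Finset W))
      (aux_visL hG hH g₀ (Classical.arbitrary W))
    rwa [Finset.card_product, Finset.card_univ, SimpleGraph.card_neighborFinset_eq_degree,
      ← hg₀] at this
  · have := aux_card_le_vv (G.boxProd H) (Classical.arbitrary V, h₀)
      ((Finset.univ : Finset V) ×ˢ (H.neighborFinset h₀))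
      (aux_visR hG hH (Classical.arbitrary V) h₀)
    rwa [Finset.card_product, Finset.card_univ, SimpleGraph.card_neighborFinset_eq_degree,
      ← hh₀, mul_comm] at this
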